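/- Suppose there exists a Lebesgue-nonmeasurable filter with the Baire property (e.g., under Martin's Axiom). Then there exists a nonprincipal filter on ω which is both Lebesgue-null and meager but cannot be covered by a Lebesgue-null set of type F_σ. -/

import Mathlib

open MeasureTheory Filter Set
open scoped ENNReal

/-- `μ` is the product (Bernoulli) measure on `Bool^ι` determined by the sequence `p`:
a probability measure giving each cylinder set its natural product value. -/
def IsBernoulli {ι : Type*} (μ : Measure (ι → Bool)) (p : ι → ℝ≥0∞) : Prop :=
  IsProbabilityMeasure μ ∧
    ∀ (s : Finset ι) (f : ι → Bool),
      μ {x | ∀ i ∈ s, x i = f i} = ∏ i ∈ s, (if f i then p i else 1 - p i)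

/-- The subset of `2^ω` corresponding to a filter on `ω`, via characteristic functions. -/
def filterSet (F : Filter ℕ) : Set (ℕ → Bool) := {x | {n | x n = true} ∈ F}

namespace TalagrandAux

noncomputable section

/-- The `n`-th interval `[n², (n+1)²)` of the partition of `ℕ`. -/
def Iv (n : ℕ) : Finset ℕ := Finset.Ico (n * n) ((n + 1) * (n + 1))

lemma mem_Iv {n m : ℕ} : m ∈ Iv n ↔ Nat.sqrt m = n := by
  constructor
  · intro h
    rw [Iv, Finset.mem_Ico] at h
    have h1 : n ≤ Nat.sqrt m := Nat.le_sqrt.2 h.1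
    have h2 : Nat.sqrt m < n + 1 := Nat.sqrt_lt.2 h.2
    omega
  · rintro rfl
    rw [Iv, Finset.mem_Ico]
    exact ⟨Nat.sqrt_le m, Nat.lt_succ_sqrt m⟩

lemma Iv_nonempty (n : ℕ) : (Iv n).Nonempty := by
  refine ⟨n * n, ?_⟩
  rw [Iv, Finset.mem_Ico]
  constructor
  · exact le_rfl
  · nlinarith

/-- Union of the intervals indexed by `B`. -/
def uSet (B : Set ℕ) : Set ℕ := {m | Nat.sqrt m ∈ B}

open scoped Classical in
/-- Fill all intervals indexed by `B` with `true`. -/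
def hmap (B : Set ℕ) (x : ℕ → Bool) : ℕ → Bool :=
  fun m => if Nat.sqrt m ∈ B then true else x m

lemma measurable_hmap (B : Set ℕ) : Measurable (hmap B) := by
  apply measurable_pi_lambda
  intro m
  classical
  simp only [hmap]
  by_cases h : Nat.sqrt m ∈ B
  · simp only [h, if_true]; exact measurable_const
  · simp only [h, if_false]; exact measurable_pi_apply m

/-- Coordinatewise xor map. -/
def xorT (e : ℕ → Bool) (x : ℕ → Bool) : ℕ → Bool := fun m => Bool.xor (e m) (x m)

lemma xorT_invol (e : ℕ → Bool) (x : ℕ → Bool) : xorT e (xorT e x) = x := by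
  funext m
  simp only [xorT]
  cases e m <;> cases x m <;> rfl

lemma continuous_xorT (e : ℕ → Bool) : Continuous (xorT e) := by
  apply continuous_pi
  intro m
  exact (continuous_of_discreteTopology (f := fun b : Bool => Bool.xor (e m) b)).comp
    (continuous_apply m)

lemma measurable_xorT (e : ℕ → Bool) : Measurable (xorT e) :=
  (continuous_xorT e).measurable

/-- The xor map as a homeomorphism. -/
def xorHomeo (e : ℕ → Bool) : (ℕ → Bool) ≃ₜ (ℕ → Bool) where
  toFun := xorT e
  invFun := xorT e
  left_inv := xorT_invol e
  right_inv := xorT_invol e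
  continuous_toFun := continuous_xorT e
  continuous_invFun := continuous_xorT e

/-- Point cylinders. -/
def cyl (s : Finset ℕ) (f : ℕ → Bool) : Set (ℕ → Bool) := {x | ∀ i ∈ s, x i = f i}

lemma xorT_preimage_cyl (e : ℕ → Bool) (s : Finset ℕ) (f : ℕ → Bool) :
    xorT e ⁻¹' cyl s f = cyl s (fun i => Bool.xor (e i) (f i)) := by
  ext x
  simp only [cyl, mem_preimage, mem_setOf_eq, xorT]
  constructor
  · intro h i hi
    rw [← h i hi]
    cases e i <;> cases x i <;> rfl
  · intro h i hi
    rw [h i hi]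
    cases e i <;> cases f i <;> rfl

lemma measurableSet_cyl (s : Finset ℕ) (f : ℕ → Bool) : MeasurableSet (cyl s f) := by
  have : cyl s f = ⋂ i ∈ s, (fun x : ℕ → Bool => x i) ⁻¹' {f i} := by
    ext x; simp [cyl]
  rw [this]
  exact MeasurableSet.biInter s.countable_toSet
    (fun i _ => (measurable_pi_apply i) (measurableSet_singleton (f i)))

variable {μ : Measure (ℕ → Bool)}

lemma cyl_measure (hμ : IsBernoulli μ fun _ => 1 / 2) (s : Finset ℕ) (f : ℕ → Bool) :
    μ (cyl s f) = 2⁻¹ ^ s.card := by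
  have h := hμ.2 s f
  have h2 : ∀ i ∈ s, (if f i then (1 : ℝ≥0∞) / 2 else 1 - 1 / 2) = 2⁻¹ := by
    intro i _
    have : (1 : ℝ≥0∞) - 1 / 2 = 2⁻¹ := by
      rw [one_div]
      refine ENNReal.sub_eq_of_eq_add (by simp) ?_
      rw [← ENNReal.inv_two_add_inv_two]
    rcases f i with _ | _ <;> simp [this, one_div]
  rw [show cyl s f = {x | ∀ i ∈ s, x i = f i} from rfl, h, Finset.prod_congr rfl h2,
    Finset.prod_const]
-- continuation (tested standalone with part1 preamble)
section part2
variable {μ : Measure (ℕ → Bool)}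

/-- From a base point of a `cylinder`, get a point cylinder. -/
lemma cylinder_singleton (t : Finset ℕ) (g : (i : t) → Bool) :
    cylinder t ({g} : Set ((i : t) → Bool)) =
      cyl t (fun i => if h : i ∈ t then g ⟨i, h⟩ else false) := by
  ext x
  simp only [cylinder, mem_preimage, mem_singleton_iff, cyl, mem_setOf_eq, funext_iff]
  constructor
  · intro h i hi
    have := h ⟨i, hi⟩
    simp only [Finset.restrict_def] at this
    simp [hi, this]
  · intro h i
    have := h i.1 i.2
    simp only [i.2, dif_pos] at this
    simpa [Finset.restrict_def] using this

lemma measure_cylinder_of_cyl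
    (hc : ∀ (s : Finset ℕ) (f : ℕ → Bool), μ (cyl s f) = 2⁻¹ ^ s.card)
    (t : Finset ℕ) (S : Set ((i : t) → Bool)) :
    μ (cylinder t S) = S.toFinite.toFinset.card * 2⁻¹ ^ t.card := by
  classical
  have hdecomp : cylinder t S =
      ⋃ g ∈ S.toFinite.toFinset, cylinder (α := fun _ : ℕ => Bool) t {g} := by
    ext x
    simp only [cylinder, mem_preimage, mem_iUnion, Set.Finite.mem_toFinset,
      mem_singleton_iff]
    constructor
    · intro h; exact ⟨_, h, rfl⟩
    · rintro ⟨g, hg, rfl⟩; exact hg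
  rw [hdecomp, measure_biUnion_finset]
  · rw [Finset.sum_congr rfl (fun g _ => by
      rw [cylinder_singleton, hc])]
    simp [Finset.sum_const, mul_comm]
  · intro g hg g' hg' hne
    simp only [Function.onFun]
    apply Set.disjoint_left.2
    intro x hx hx'
    simp only [cylinder, mem_preimage, mem_singleton_iff] at hx hx'
    exact hne (hx ▸ hx')
  · intro g _
    rw [cylinder_singleton]
    exact measurableSet_cyl _ _

/-- The Bernoulli(1/2) measure is invariant under coordinatewise xor. -/
lemma map_xorT_eq (hμ : IsBernoulli μ fun _ => 1 / 2) (e : ℕ → Bool) :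
    μ.map (xorT e) = μ := by
  haveI : IsProbabilityMeasure μ := hμ.1
  haveI : IsProbabilityMeasure (μ.map (xorT e)) :=
    Measure.isProbabilityMeasure_map (measurable_xorT e).aemeasurable
  have hcylμ : ∀ (s : Finset ℕ) (f : ℕ → Bool), μ (cyl s f) = 2⁻¹ ^ s.card :=
    cyl_measure hμ
  have hcylmap : ∀ (s : Finset ℕ) (f : ℕ → Bool),
      (μ.map (xorT e)) (cyl s f) = 2⁻¹ ^ s.card := by
    intro s f
    rw [Measure.map_apply (measurable_xorT e) (measurableSet_cyl s f),
      xorT_preimage_cyl, hcylμ]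
  refine ext_of_generate_finite (measurableCylinders fun _ : ℕ => Bool)
    generateFrom_measurableCylinders.symm isPiSystem_measurableCylinders ?_ (by simp)
  intro A hA
  obtain ⟨t, S, _, rfl⟩ := (mem_measurableCylinders A).1 hA
  rw [measure_cylinder_of_cyl hcylmap, measure_cylinder_of_cyl hcylμ]

lemma xorT_preimage_null (hμ : IsBernoulli μ fun _ => 1 / 2) (e : ℕ → Bool)
    {A : Set (ℕ → Bool)} (hA : MeasurableSet A) (h0 : μ A = 0) :
    μ (xorT e ⁻¹' A) = 0 := by
  rw [← Measure.map_apply (measurable_xorT e) hA, map_xorT_eq hμ, h0]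

/-- Filling finitely many intervals with ones maps null sets to null preimages. -/
lemma hmap_finite_null (hμ : IsBernoulli μ fun _ => 1 / 2) (σ : Finset ℕ)
    {A : Set (ℕ → Bool)} (hA : MeasurableSet A) (h0 : μ A = 0) :
    μ (hmap (↑σ) ⁻¹' A) = 0 := by
  classical
  set s : Finset ℕ := σ.biUnion Iv with hs
  have hmem : ∀ m : ℕ, m ∈ s ↔ Nat.sqrt m ∈ σ := by
    intro m
    simp only [hs, Finset.mem_biUnion]
    constructor
    · rintro ⟨n, hn, hmn⟩; rwa [mem_Iv.1 hmn]
    · intro h; exact ⟨_, h, mem_Iv.2 rfl⟩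
  have hcover : hmap (↑σ) ⁻¹' A ⊆
      ⋃ g : (i : s) → Bool, xorT (fun i => if h : i ∈ s then !(g ⟨i, h⟩) else false) ⁻¹' A := by
    intro x hx
    simp only [mem_preimage] at hx
    refine mem_iUnion.2 ⟨fun i => x i.1, ?_⟩
    simp only [mem_preimage]
    convert hx using 1
    funext m
    simp only [xorT, hmap]
    by_cases h : m ∈ s
    · have h2 : Nat.sqrt m ∈ (↑σ : Set ℕ) := (hmem m).1 h
      rw [dif_pos h, if_pos h2]
      cases x m <;> rfl
    · have h2 : Nat.sqrt m ∉ (↑σ : Set ℕ) := fun hc => h ((hmem m).2 hc)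
      rw [dif_neg h, if_neg h2]
      cases x m <;> rfl
  refine measure_mono_null hcover ?_
  refine measure_iUnion_null fun g => ?_
  exact xorT_preimage_null hμ _ hA h0

end part2
section part3
variable {μ : Measure (ℕ → Bool)}

/-- Clopen approximation of a set from its `[0,N)`-prefix. -/
def Q (N : ℕ) (C : Set (ℕ → Bool)) : Set (ℕ → Bool) :=
  {y | ∃ z ∈ C, ∀ i < N, z i = y i}

lemma subset_Q (N : ℕ) (C : Set (ℕ → Bool)) : C ⊆ Q N C :=
  fun y hy => ⟨y, hy, fun _ _ => rfl⟩

lemma Q_antitone {N N' : ℕ} (h : N ≤ N') (C : Set (ℕ → Bool)) : Q N' C ⊆ Q N C := by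
  rintro y ⟨z, hz, hagree⟩
  exact ⟨z, hz, fun i hi => hagree i (lt_of_lt_of_le hi h)⟩

lemma measurableSet_Q (N : ℕ) (C : Set (ℕ → Bool)) : MeasurableSet (Q N C) := by
  have hQ : Q N C = (fun y : ℕ → Bool => fun i : Fin N => y i.1) ⁻¹'
      ((fun z : ℕ → Bool => fun i : Fin N => z i.1) '' C) := by
    ext y
    simp only [Q, mem_setOf_eq, mem_preimage, mem_image]
    constructor
    · rintro ⟨z, hz, hagree⟩
      exact ⟨z, hz, funext fun i => hagree i.1 i.2⟩
    · rintro ⟨z, hz, heq⟩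
      exact ⟨z, hz, fun i hi => congrFun heq ⟨i, hi⟩⟩
  rw [hQ]
  exact (measurable_pi_lambda _ fun i => measurable_pi_apply i.1)
    ((Set.toFinite _).measurableSet)

lemma iInter_Q {C : Set (ℕ → Bool)} (hC : IsClosed C) : ⋂ N, Q N C = C := by
  apply Subset.antisymm
  · intro y hy
    by_contra hyC
    have hopen : IsOpen Cᶜ := hC.isOpen_compl
    obtain ⟨I, u, hu, hpi⟩ := isOpen_pi_iff.1 hopen y hyC
    set N : ℕ := (I.sup id) + 1 with hN
    obtain ⟨z, hz, hagree⟩ := mem_iInter.1 hy N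
    have hzmem : z ∈ (↑I : Set ℕ).pi u := by
      intro a ha
      have haN : a < N := Nat.lt_succ_of_le (Finset.le_sup (f := id) ha)
      rw [hagree a haN]
      exact (hu a ha).2
    exact (hpi hzmem) hz
  · intro y hy
    exact mem_iInter.2 fun N => subset_Q N C hy

lemma measure_hmap_preimage_closed (hμ : IsBernoulli μ fun _ => 1 / 2)
    (B : Set ℕ) {C : Set (ℕ → Bool)} (hC : IsClosed C) :
    μ (hmap B ⁻¹' C) = ⨅ N, μ (hmap B ⁻¹' Q N C) := by
  haveI : IsProbabilityMeasure μ := hμ.1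
  have h1 : hmap B ⁻¹' C = ⋂ N, hmap B ⁻¹' Q N C := by
    rw [← preimage_iInter, iInter_Q hC]
  rw [h1]
  refine Antitone.measure_iInter (fun N N' h => preimage_mono (Q_antitone h C)) ?_ ?_
  · exact fun N => ((measurableSet_Q N C).preimage (measurable_hmap B)).nullMeasurableSet
  · exact ⟨0, measure_ne_top μ _⟩

lemma Q_local {N : ℕ} {C : Set (ℕ → Bool)} {y y' : ℕ → Bool}
    (h : ∀ i < N, y i = y' i) : y ∈ Q N C ↔ y' ∈ Q N C := by
  constructor
  · rintro ⟨z, hz, hagree⟩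
    exact ⟨z, hz, fun i hi => (hagree i hi).trans (h i hi)⟩
  · rintro ⟨z, hz, hagree⟩
    exact ⟨z, hz, fun i hi => (hagree i hi).trans (h i hi).symm⟩

lemma hmap_agree {B B' : Set ℕ} {N : ℕ} (h : ∀ n, n * n < N → (n ∈ B ↔ n ∈ B'))
    (x : ℕ → Bool) : ∀ i < N, hmap B x i = hmap B' x i := by
  intro i hi
  classical
  have hsq : Nat.sqrt i * Nat.sqrt i < N := lt_of_le_of_lt (Nat.sqrt_le i) hi
  have := h (Nat.sqrt i) hsq
  simp only [hmap]
  by_cases hb : Nat.sqrt i ∈ B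
  · rw [if_pos hb, if_pos (this.1 hb)]
  · rw [if_neg hb, if_neg (fun hc => hb (this.2 hc))]

/-- Key avoidance lemma: for a closed null set `C`, any `B` avoiding a suitable
interval of indices has small `μ (hmap B ⁻¹' C)`. -/
lemma avoid (hμ : IsBernoulli μ fun _ => 1 / 2) {C : Set (ℕ → Bool)}
    (hC : IsClosed C) (h0 : μ C = 0) {ε : ℝ≥0∞} (hε : 0 < ε) (m : ℕ) :
    ∃ m', m < m' ∧ ∀ B : Set ℕ, (∀ j, m ≤ j → j < m' → j ∉ B) →
      μ (hmap B ⁻¹' C) < ε := by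
  classical
  have key : ∀ σ : Finset ℕ, ∃ N, μ (hmap (↑σ) ⁻¹' Q N C) < ε := by
    intro σ
    have h1 : μ (hmap (↑σ) ⁻¹' C) = 0 :=
      hmap_finite_null hμ σ hC.measurableSet h0
    have h2 : ⨅ N, μ (hmap (↑σ) ⁻¹' Q N C) = 0 := by
      rw [← measure_hmap_preimage_closed hμ _ hC]; exact h1
    have h3 : ⨅ N, μ (hmap (↑σ) ⁻¹' Q N C) < ε := by rw [h2]; exact hε
    exact iInf_lt_iff.1 h3
  choose Nf hNf using key
  set Nstar : ℕ := ((Finset.range m).powerset).sup Nf with hNstar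
  refine ⟨m + Nstar + 1, by omega, ?_⟩
  intro B hB
  set σ : Finset ℕ := (Finset.range m).filter (fun j => j ∈ B) with hσ
  have hσmem : σ ∈ (Finset.range m).powerset := Finset.mem_powerset.2 (Finset.filter_subset _ _)
  have hagree : ∀ n, n * n < Nstar → (n ∈ B ↔ n ∈ (↑σ : Set ℕ)) := by
    intro n hn
    have hnn : n ≤ n * n := Nat.le_mul_self n
    by_cases hnm : n < m
    · simp only [hσ, Finset.coe_filter, mem_setOf_eq, Finset.mem_range]
      constructor
      · intro h; exact ⟨hnm, h⟩
      · intro h; exact h.2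
    · have hnB : n ∉ B := hB n (by omega) (by omega)
      have hnσ : n ∉ (↑σ : Set ℕ) := by
        simp only [hσ, Finset.coe_filter, mem_setOf_eq, Finset.mem_range]
        intro h; exact hnm h.1
      constructor
      · intro h; exact absurd h hnB
      · intro h; exact absurd h hnσ
  have heq : hmap B ⁻¹' Q Nstar C = hmap (↑σ) ⁻¹' Q Nstar C := by
    ext x
    simp only [mem_preimage]
    exact Q_local (hmap_agree hagree x)
  calc μ (hmap B ⁻¹' C) ≤ μ (hmap B ⁻¹' Q Nstar C) :=
        measure_mono (preimage_mono (subset_Q Nstar C))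
    _ = μ (hmap (↑σ) ⁻¹' Q Nstar C) := by rw [heq]
    _ ≤ μ (hmap (↑σ) ⁻¹' Q (Nf σ) C) :=
        measure_mono (preimage_mono (Q_antitone (Finset.le_sup hσmem) C))
    _ < ε := hNf σ

end part3
section part4
open Topology

/-- A filter finer than `cofinite` is invariant under finite symmetric differences. -/
lemma filterSet_xorT_preimage {G : Filter ℕ} (hcof : G ≤ Filter.cofinite)
    {e : ℕ → Bool} (he : {n | e n = true}.Finite) :
    xorT e ⁻¹' filterSet G = filterSet G := by
  have key : ∀ x : ℕ → Bool, x ∈ filterSet G → xorT e x ∈ filterSet G := by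
    intro x hx
    simp only [filterSet, mem_setOf_eq] at hx ⊢
    have hcompl : {n | e n = true}ᶜ ∈ G := hcof (by
      simp only [Filter.mem_cofinite, compl_compl]; exact he)
    have hsub : {n | x n = true} ∩ {n | e n = true}ᶜ ⊆ {n | xorT e x n = true} := by
      intro n ⟨hn1, hn2⟩
      simp only [mem_compl_iff, mem_setOf_eq] at hn1 hn2 ⊢
      simp only [xorT]
      rw [Bool.not_eq_true] at hn2
      rw [hn1, hn2]
      rfl
    exact Filter.mem_of_superset (Filter.inter_mem hx hcompl) hsub
  apply Subset.antisymm
  · intro x hx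
    simp only [mem_preimage] at hx
    have := key _ hx
    rwa [xorT_invol] at this
  · intro x hx
    exact key x hx

lemma isMeagre_filterSet {G : Filter ℕ} (hne : G.NeBot) (hcof : G ≤ Filter.cofinite)
    (hbm : BaireMeasurableSet (filterSet G)) : IsMeagre (filterSet G) := by
  classical
  by_contra hnm
  set S := filterSet G with hS
  obtain ⟨u, huo, hueq⟩ := hbm.residualEq_isOpen
  have hdiff : IsMeagre (u \ S) ∧ IsMeagre (S \ u) := by
    have hmem : {x | (x ∈ S) = (x ∈ u)} ∈ residual (ℕ → Bool) := hueq
    constructor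
    · refine flip (IsMeagre.mono (s := {x | (x ∈ S) = (x ∈ u)}ᶜ)) ?_ ?_
      · simpa [IsMeagre] using hmem
      · intro x ⟨hxu, hxS⟩
        simp only [mem_compl_iff, mem_setOf_eq]
        intro h
        exact hxS (h ▸ hxu)
    · refine flip (IsMeagre.mono (s := {x | (x ∈ S) = (x ∈ u)}ᶜ)) ?_ ?_
      · simpa [IsMeagre] using hmem
      · intro x ⟨hxS, hxu⟩
        simp only [mem_compl_iff, mem_setOf_eq]
        intro h
        exact hxu (h ▸ hxS)
  have hune : u.Nonempty := by
    rcases eq_empty_or_nonempty u with rfl | h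
    · exact absurd (hdiff.2.mono (by simp)) hnm
    · exact h
  obtain ⟨y, hy⟩ := hune
  obtain ⟨I, v, hv, hpi⟩ := isOpen_pi_iff.1 huo y hy
  have hcyl_sub : cyl I y ⊆ u := by
    intro x hx
    apply hpi
    intro a ha
    rw [hx a ha]
    exact (hv a ha).2
  -- every pattern cylinder minus S is meager
  have hpattern : ∀ g : ℕ → Bool, IsMeagre (cyl I g \ S) := by
    intro g
    set e : ℕ → Bool := fun n => if n ∈ I then Bool.xor (y n) (g n) else false with he
    have hefin : {n | e n = true}.Finite := by
      apply Set.Finite.subset I.finite_toSet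
      intro n hn
      simp only [he, mem_setOf_eq] at hn
      by_cases hnI : n ∈ I
      · exact Finset.mem_coe.2 hnI
      · rw [if_neg hnI] at hn
        exact absurd hn Bool.false_ne_true
    have hpre : xorT e ⁻¹' (cyl I y \ S) = cyl I g \ S := by
      rw [preimage_diff, filterSet_xorT_preimage hcof hefin, xorT_preimage_cyl]
      congr 1
      ext x
      simp only [cyl, mem_setOf_eq]
      constructor
      · intro h i hi
        have := h i hi
        rw [he] at this
        simp only [if_pos hi] at this
        rw [this]
        cases y i <;> cases g i <;> rfl
      · intro h i hi
        rw [h i hi, he]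
        simp only [if_pos hi]
        cases y i <;> cases g i <;> rfl
    rw [← hpre]
    exact IsMeagre.preimage_of_isOpenMap (continuous_xorT e) (xorHomeo e).isOpenMap
      (hdiff.1.mono (diff_subset_diff_left hcyl_sub))
  -- S is comeager
  have hScomeager : S ∈ residual (ℕ → Bool) := by
    have hcompl : IsMeagre Sᶜ := by
      have hcover : Sᶜ ⊆ ⋃ η : (i : I) → Bool,
          (cyl I (fun n => if h : n ∈ I then η ⟨n, h⟩ else false) \ S) := by
        intro x hx
        refine mem_iUnion.2 ⟨fun i => x i.1, ?_⟩
        refine ⟨?_, hx⟩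
        intro i hi
        simp only [dif_pos hi]
      refine IsMeagre.mono hcover ?_
      rw [IsMeagre, compl_iUnion]
      exact countable_iInter_mem.2 fun η => hpattern _
    simpa [IsMeagre, compl_compl] using hcompl
  -- the complement-flip of S is also comeager and disjoint from S
  set c : (ℕ → Bool) → (ℕ → Bool) := xorT (fun _ => true) with hc
  have hc_res : c ⁻¹' S ∈ residual (ℕ → Bool) :=
    tendsto_residual_of_isOpenMap (continuous_xorT _) (xorHomeo _).isOpenMap hScomeager
  have hdisj : S ∩ c ⁻¹' S = ∅ := by
    ext x
    simp only [mem_inter_iff, mem_empty_iff_false, iff_false, not_and]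
    intro hxS hxc
    simp only [hS, filterSet, mem_preimage, mem_setOf_eq, hc, xorT] at hxS hxc
    have hcompl : {n | x n = true}ᶜ ∈ G := by
      have hseteq : {n | Bool.xor true (x n) = true} = {n | x n = true}ᶜ := by
        ext n
        simp only [mem_compl_iff, mem_setOf_eq]
        cases x n <;> simp
      rwa [hseteq] at hxc
    have : ({n | x n = true} ∩ {n | x n = true}ᶜ) ∈ G := Filter.inter_mem hxS hcompl
    rw [inter_compl_self] at this
    exact (Filter.empty_notMem G) this
  have : (∅ : Set (ℕ → Bool)) ∈ residual (ℕ → Bool) := by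
    rw [← hdisj]
    exact Filter.inter_mem hScomeager hc_res
  obtain ⟨x, hx⟩ := (dense_of_mem_residual this).nonempty
  exact hx

end part4
section part5
variable {μ : Measure (ℕ → Bool)}

/-- Borel–Cantelli: a.e. point contains only finitely many full intervals. -/
lemma null_infinitely_many_blocks (hμ : IsBernoulli μ fun _ => 1 / 2) :
    μ {x : ℕ → Bool | {n | ∀ m ∈ Iv n, x m = true}.Infinite} = 0 := by
  haveI : IsProbabilityMeasure μ := hμ.1
  set W := {x : ℕ → Bool | {n | ∀ m ∈ Iv n, x m = true}.Infinite} with hW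
  have hbound : ∀ N : ℕ, μ W ≤ 2⁻¹ ^ N * 2 := by
    intro N
    have hsub : W ⊆ ⋃ k : ℕ, cyl (Iv (N + k)) (fun _ => true) := by
      intro x hx
      obtain ⟨n, hn, hlt⟩ := Set.Infinite.exists_gt hx N
      refine mem_iUnion.2 ⟨n - N, ?_⟩
      have : N + (n - N) = n := by omega
      rw [this]
      exact hn
    refine le_trans (measure_mono hsub) (le_trans (measure_iUnion_le _) ?_)
    have hcardIv : ∀ n : ℕ, (Iv n).card = 2 * n + 1 := by
      intro n
      rw [Iv, Nat.card_Ico]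
      ring_nf
      omega
    have hterm : ∀ k : ℕ, μ (cyl (Iv (N + k)) (fun _ => true)) ≤ 2⁻¹ ^ N * 2⁻¹ ^ k := by
      intro k
      rw [cyl_measure hμ, hcardIv]
      calc (2⁻¹ : ℝ≥0∞) ^ (2 * (N + k) + 1) = 2⁻¹ ^ (N + k) * 2⁻¹ ^ (N + k + 1) := by
            rw [← pow_add]; ring_nf
        _ ≤ 2⁻¹ ^ (N + k) * 1 := by
            refine mul_le_mul_right (pow_le_one' ?_ _) _
            simp [ENNReal.inv_le_one]
        _ = 2⁻¹ ^ N * 2⁻¹ ^ k := by rw [mul_one, pow_add]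
    refine le_trans (ENNReal.tsum_le_tsum hterm) ?_
    rw [ENNReal.tsum_mul_left, ENNReal.tsum_geometric]
    apply mul_le_mul_right
    rw [show (1 : ℝ≥0∞) - 2⁻¹ = 2⁻¹ by
      refine ENNReal.sub_eq_of_eq_add (by simp) ?_
      rw [← ENNReal.inv_two_add_inv_two]]
    simp
  have htend : Filter.Tendsto (fun N : ℕ => (2⁻¹ : ℝ≥0∞) ^ N * 2) Filter.atTop (nhds 0) := by
    have h1 : Filter.Tendsto (fun N : ℕ => (2⁻¹ : ℝ≥0∞) ^ N) Filter.atTop (nhds 0) :=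
      ENNReal.tendsto_pow_atTop_nhds_zero_of_lt_one (by norm_num)
    have := ENNReal.Tendsto.mul_const h1 (Or.inr (by norm_num : (2 : ℝ≥0∞) ≠ ⊤))
    simpa using this
  have : μ W ≤ 0 := ge_of_tendsto' htend hbound
  exact le_antisymm this zero_le

end part5
end

end TalagrandAux

open TalagrandAux

theorem null_meager_not_coverable_by_null_Fsigma (μ : Measure (ℕ → Bool))
    (hμ : IsBernoulli μ fun _ => 1 / 2)
    (hG : ∃ G : Filter ℕ, G.NeBot ∧ G ≤ Filter.cofinite ∧
      ¬ NullMeasurableSet (filterSet G) μ ∧ BaireMeasurableSet (filterSet G)) :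
    ∃ F : Filter ℕ, F.NeBot ∧ F ≤ Filter.cofinite ∧
      μ (filterSet F) = 0 ∧ IsMeagre (filterSet F) ∧
      ∀ K : Set (ℕ → Bool),
        (∃ C : ℕ → Set (ℕ → Bool), (∀ n, IsClosed (C n)) ∧ K = ⋃ n, C n) →
        μ K = 0 → ¬ filterSet F ⊆ K := by
  classical
  obtain ⟨G, hGne, hGcof, hGnm, hGbm⟩ := hG
  haveI : IsProbabilityMeasure μ := hμ.1
  set H : Ultrafilter ℕ := Filter.hyperfilter ℕ with hH
  set F : Filter ℕ :=
    { sets := {X | X ∈ G ∧ {n | ↑(Iv n) ⊆ X} ∈ (H : Filter ℕ)}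
      univ_sets := ⟨Filter.univ_mem, by
        have : {n | ↑(Iv n) ⊆ (Set.univ : Set ℕ)} = Set.univ := by
          ext n; simp
        rw [this]; exact Filter.univ_mem⟩
      sets_of_superset := by
        rintro X Y ⟨hXG, hXH⟩ hXY
        refine ⟨Filter.mem_of_superset hXG hXY, Filter.mem_of_superset hXH ?_⟩
        intro n hn
        exact subset_trans hn hXY
      inter_sets := by
        rintro X Y ⟨hXG, hXH⟩ ⟨hYG, hYH⟩
        refine ⟨Filter.inter_mem hXG hYG, ?_⟩
        refine Filter.mem_of_superset (Filter.inter_mem hXH hYH) ?_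
        rintro n ⟨hn1, hn2⟩
        exact subset_inter hn1 hn2 } with hF
  have hFmem : ∀ X : Set ℕ, X ∈ F ↔ X ∈ G ∧ {n | ↑(Iv n) ⊆ X} ∈ (H : Filter ℕ) :=
    fun X => Iff.rfl
  have hFsub : filterSet F ⊆ filterSet G := by
    intro x hx
    exact ((hFmem _).1 hx).1
  refine ⟨F, ?_, ?_, ?_, ?_, ?_⟩
  · -- NeBot
    rw [Filter.neBot_iff]
    intro hbot
    have hempty : (∅ : Set ℕ) ∈ F := by rw [hbot]; exact Filter.mem_bot
    obtain ⟨-, hH2⟩ := (hFmem _).1 hempty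
    have : {n | ↑(Iv n) ⊆ (∅ : Set ℕ)} = ∅ := by
      ext n
      simp only [Set.subset_empty_iff, mem_setOf_eq, mem_empty_iff_false, iff_false]
      intro h
      obtain ⟨m, hm⟩ := Iv_nonempty n
      have : m ∈ (↑(Iv n) : Set ℕ) := hm
      rw [h] at this
      exact this
    rw [this] at hH2
    exact (Filter.empty_notMem _) hH2
  · -- ≤ cofinite
    intro X hX
    refine (hFmem X).2 ⟨hGcof hX, Filter.hyperfilter_le_cofinite ?_⟩
    rw [Filter.mem_cofinite]
    have hXc : Xᶜ.Finite := hX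
    refine Set.Finite.subset (hXc.image Nat.sqrt) ?_
    intro n hn
    simp only [mem_compl_iff, mem_setOf_eq] at hn
    rw [Set.not_subset] at hn
    obtain ⟨m, hm1, hm2⟩ := hn
    exact ⟨m, hm2, mem_Iv.1 hm1⟩
  · -- null
    refine measure_mono_null ?_ (null_infinitely_many_blocks hμ)
    intro x hx
    obtain ⟨-, hH2⟩ := (hFmem _).1 hx
    simp only [mem_setOf_eq]
    have heq : {n | ∀ m ∈ Iv n, x m = true} = {n | ↑(Iv n) ⊆ {n | x n = true}} := by
      ext n
      simp [Set.subset_def]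
    rw [heq]
    intro hfin
    exact Set.Finite.notMem_hyperfilter hfin hH2
  · -- meager
    exact (isMeagre_filterSet hGne hGcof hGbm).mono hFsub
  · -- non-coverability
    rintro K ⟨C, hCcl, rfl⟩ hK0 hsub
    set θ : ℝ≥0∞ := μ (filterSet G) with hθ
    have hθ0 : θ ≠ 0 := fun h => hGnm (NullMeasurableSet.of_null h)
    have hθtop : θ ≠ ⊤ := measure_ne_top μ _
    have hε : 0 < θ / 2 := ENNReal.half_pos hθ0
    set C' : ℕ → Set (ℕ → Bool) := fun k => ⋃ i ∈ Finset.range (k + 1), C i with hC'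
    have hC'cl : ∀ k, IsClosed (C' k) := fun k =>
      (Finset.range (k + 1)).finite_toSet.isClosed_biUnion (fun i _ => hCcl i)
    have hC'null : ∀ k, μ (C' k) = 0 := by
      intro k
      refine measure_mono_null ?_ hK0
      exact Set.iUnion₂_subset fun i _ => Set.subset_iUnion C i
    have hC'mono : Monotone C' := by
      intro k k' hk
      exact Set.biUnion_subset_biUnion_left (Finset.range_subset_range.2 (by omega))
    have hC'union : ⋃ k, C' k = ⋃ n, C n := by
      apply Subset.antisymm
      · exact Set.iUnion_subset fun k => Set.iUnion₂_subset fun i _ => Set.subset_iUnion C i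
      · refine Set.iUnion_subset fun n => ?_
        refine subset_trans ?_ (Set.subset_iUnion C' n)
        exact Set.subset_biUnion_of_mem (Finset.self_mem_range_succ n)
    choose mf hmflt hmfspec using fun k m => avoid hμ (hC'cl k) (hC'null k) hε m
    set a : ℕ → ℕ :=
      fun j => Nat.rec 0 (fun j prev => (Finset.range (j + 1)).sup fun k => mf k prev) j
      with ha
    have hasucc : ∀ j, a (j + 1) = (Finset.range (j + 1)).sup fun k => mf k (a j) :=
      fun j => rfl
    have hsupk : ∀ k j, k ≤ j → mf k (a j) ≤ a (j + 1) := by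
      intro k j hk
      rw [hasucc]
      exact Finset.le_sup (f := fun k => mf k (a j)) (Finset.mem_range.2 (Nat.lt_succ_of_le hk))
    have hlt : ∀ j, a j < a (j + 1) := by
      intro j
      exact lt_of_lt_of_le (hmflt 0 (a j)) (hsupk 0 j (by omega))
    have hmono : StrictMono a := strictMono_nat_of_lt_succ hlt
    set A : Set ℕ := {i | ∃ j, a (2 * j) ≤ i ∧ i < a (2 * j + 1)} with hA
    have hAodd : ∀ k, μ (hmap A ⁻¹' C' k) < θ / 2 := by
      intro k
      apply hmfspec k (a (2 * k + 1)) A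
      intro i hi1 hi2 hiA
      obtain ⟨j', hj1, hj2⟩ := hiA
      have hup : i < a (2 * k + 2) := lt_of_lt_of_le hi2 (hsupk k (2 * k + 1) (by omega))
      rcases lt_or_ge j' (k + 1) with h | h
      · have hle : a (2 * j' + 1) ≤ a (2 * k + 1) :=
          hmono.monotone (show 2 * j' + 1 ≤ 2 * k + 1 by omega)
        omega
      · have hle : a (2 * k + 2) ≤ a (2 * j') :=
          hmono.monotone (show 2 * k + 2 ≤ 2 * j' by omega)
        omega
    have hAeven : ∀ k, μ (hmap Aᶜ ⁻¹' C' k) < θ / 2 := by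
      intro k
      apply hmfspec k (a (2 * k)) Aᶜ
      intro i hi1 hi2 hiA
      apply hiA
      exact ⟨k, hi1, lt_of_lt_of_le hi2 (hsupk k (2 * k) (by omega))⟩
    have hBexists : ∃ B : Set ℕ, B ∈ (H : Filter ℕ) ∧
        ∀ k, μ (hmap B ⁻¹' C' k) < θ / 2 := by
      by_cases hAH : A ∈ H
      · exact ⟨A, hAH, hAodd⟩
      · exact ⟨Aᶜ, (Ultrafilter.compl_mem_iff_notMem).2 hAH, hAeven⟩
    obtain ⟨B, hBH, hBbound⟩ := hBexists
    have hincl : filterSet G ⊆ hmap B ⁻¹' (⋃ n, C n) := by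
      intro x hx
      simp only [mem_preimage]
      apply hsub
      refine (hFmem _).2 ⟨?_, ?_⟩
      · refine Filter.mem_of_superset hx ?_
        intro n hn
        simp only [mem_setOf_eq, hmap] at hn ⊢
        split
        · rfl
        · exact hn
      · refine Filter.mem_of_superset hBH ?_
        intro n hn
        intro m hm
        simp only [mem_setOf_eq, hmap]
        rw [if_pos]
        rw [mem_Iv.1 (Finset.mem_coe.1 hm)]
        exact hn
    have hbig : θ ≤ μ (hmap B ⁻¹' (⋃ n, C n)) := measure_mono hincl
    have hsmall : μ (hmap B ⁻¹' (⋃ n, C n)) ≤ θ / 2 := by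
      rw [← hC'union, Set.preimage_iUnion]
      rw [Monotone.measure_iUnion (fun k k' hk => preimage_mono (hC'mono hk))]
      exact iSup_le fun k => le_of_lt (hBbound k)
    have : θ < θ := lt_of_le_of_lt (le_trans hbig hsmall) (ENNReal.half_lt_self hθ0 hθtop)
    exact absurd this (lt_irrefl θ)
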